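/- arXiv:1809.03289 — 5 statements merged into one kernel-verified Lean document; each statement's English description precedes it below -/
import Mathlib

section
/- If f is five times continuously differentiable on a neighborhood of x, then the Jiang–Shu smoothness indicator β₀³ = (13/12)(f(x-h) - 2f(x) + f(x+h))² + (1/4)(f(x-h) - f(x+h))² satisfies β₀³ = (f'(x))² h² + ((13/12)(f''(x))² + (1/3) f'(x) f'''(x)) h⁴ + O(h⁵) as h → 0. -/
open Asymptotics Filter Topology


lemma taylor_isBigO : ∀ (n : ℕ) (f : ℝ → ℝ) (x : ℝ), ContDiffAt ℝ (n + 1) f x →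
    (fun h : ℝ => f (x + h) -
        ∑ k ∈ Finset.range (n + 1), ((k.factorial : ℝ)⁻¹ * iteratedDeriv k f x) * h ^ k)
      =O[𝓝 (0 : ℝ)] fun h : ℝ => h ^ (n + 1) := by
  intro n
  induction n with
  | zero =>
    intro f x hf
    have hd : DifferentiableAt ℝ f x := hf.differentiableAt (by norm_num)
    have ht : Tendsto (fun h : ℝ => x + h) (𝓝 0) (𝓝 x) := by
      simpa using ((continuous_add_left x).tendsto (0 : ℝ))
    have h1 := hd.isBigO_sub.comp_tendsto ht
    simp only [Function.comp_def, add_sub_cancel_left] at h1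
    simpa [Finset.sum_range_one, iteratedDeriv_zero] using h1
  | succ n IH =>
    intro f x hf
    -- deriv f is C^{n+1} at x
    obtain ⟨u, hu, hfu⟩ := hf.contDiffOn le_rfl (by simp)
    rcases mem_nhds_iff.1 hu with ⟨v, hvu, hv_open, hxv⟩
    have hfv : ContDiffOn ℝ (n + 1 + 1) f v := hfu.mono hvu
    have hdf : ContDiffOn ℝ (n + 1) (deriv f) v :=
      hfv.deriv_of_isOpen hv_open (by exact_mod_cast le_refl _)
    have hg : ContDiffAt ℝ (n + 1) (deriv f) x := hdf.contDiffAt (hv_open.mem_nhds hxv)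
    have hG := IH (deriv f) x hg
    obtain ⟨C, hC⟩ := hG.bound
    set c : ℕ → ℝ := fun k => (k.factorial : ℝ)⁻¹ * iteratedDeriv k f x with hc
    set R : ℝ → ℝ := fun h => f (x + h) - ∑ k ∈ Finset.range (n + 1 + 1), c k * h ^ k with hR
    set G : ℝ → ℝ := fun t => deriv f (x + t) -
      ∑ j ∈ Finset.range (n + 1), ((j.factorial : ℝ)⁻¹ * iteratedDeriv j (deriv f) x) * t ^ j
      with hGdef
    have ht : Tendsto (fun h : ℝ => x + h) (𝓝 0) (𝓝 x) := by
      simpa using ((continuous_add_left x).tendsto (0 : ℝ))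
    have hdiff : ∀ᶠ t in 𝓝 (0 : ℝ), DifferentiableAt ℝ f (x + t) := by
      have h1 : ∀ᶠ y in 𝓝 x, DifferentiableAt ℝ f y := by
        filter_upwards [hf.eventually (by simp)] with y hy
        exact hy.differentiableAt (by simp)
      exact ht.eventually h1
    have hderiv : ∀ᶠ t in 𝓝 (0 : ℝ), HasDerivAt R (G t) t := by
      filter_upwards [hdiff] with t hdt
      have h1 : HasDerivAt (fun h : ℝ => f (x + h)) (deriv f (x + t)) t := by
        have := HasDerivAt.comp t hdt.hasDerivAt ((hasDerivAt_id t).const_add x)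
        simpa [Function.comp_def] using this
      have h2 : HasDerivAt (fun h : ℝ => ∑ k ∈ Finset.range (n + 1 + 1), c k * h ^ k)
          (∑ k ∈ Finset.range (n + 1 + 1), c k * ((k : ℝ) * t ^ (k - 1))) t :=
        HasDerivAt.fun_sum fun k _ => (hasDerivAt_pow k t).const_mul (c k)
      have h3 : HasDerivAt R _ t := h1.sub h2
      convert h3 using 1
      simp only [hGdef]
      congr 1
      rw [Finset.sum_range_succ' (fun k => c k * ((k : ℝ) * t ^ (k - 1))) (n + 1)]
      simp only [Nat.cast_zero, zero_mul, mul_zero, add_zero]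
      refine Finset.sum_congr rfl fun j _ => ?_
      rw [hc]
      simp only [iteratedDeriv_succ' (n := j)]
      rw [Nat.factorial_succ, Nat.add_sub_cancel]
      push_cast
      have : ((j.factorial : ℝ)) ≠ 0 := by exact_mod_cast j.factorial_ne_zero
      field_simp
    obtain ⟨δ, hδ, hball⟩ := Metric.eventually_nhds_iff.1 (hC.and hderiv)
    set C' : ℝ := max C 0 with hC'
    have key : ∀ h : ℝ, |h| < δ → ‖R h‖ ≤ C' * ‖h ^ (n + 2)‖ := by
      intro h hh
      have hsub : ∀ t ∈ Set.uIcc (0 : ℝ) h, |t| ≤ |h| := by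
        intro t ht
        rcases Set.mem_uIcc.1 ht with ⟨h1, h2⟩ | ⟨h1, h2⟩ <;>
          · rw [abs_le]
            constructor <;> nlinarith [le_abs_self h, neg_abs_le h, abs_nonneg h]
      have hmem : ∀ t ∈ Set.uIcc (0 : ℝ) h, dist t 0 < δ := by
        intro t ht
        rw [Real.dist_eq, sub_zero]
        exact lt_of_le_of_lt (hsub t ht) hh
      have hMVT := Convex.norm_image_sub_le_of_norm_hasDerivWithin_le
        (f := R) (f' := G) (C := C' * |h| ^ (n + 1))
        (fun t htm => ((hball (hmem t htm)).2).hasDerivWithinAt)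
        (fun t htm => by
          have h1 := (hball (hmem t htm)).1
          calc ‖G t‖ ≤ C * ‖t ^ (n + 1)‖ := h1
            _ ≤ C' * |h| ^ (n + 1) := by
                rw [Real.norm_eq_abs, abs_pow]
                apply mul_le_mul (le_max_left _ _) (pow_le_pow_left₀ (abs_nonneg t) (hsub t htm) _)
                  (by positivity) (le_max_right _ _))
        (convex_uIcc _ _) Set.left_mem_uIcc Set.right_mem_uIcc
      have hR0 : R 0 = 0 := by
        rw [hR]
        simp only [add_zero]
        rw [Finset.sum_range_succ' (fun k => c k * (0:ℝ) ^ k) (n + 1)]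
        simp [hc]
      rw [hR0, sub_zero, sub_zero, Real.norm_eq_abs] at hMVT
      calc ‖R h‖ ≤ C' * |h| ^ (n + 1) * |h| := hMVT
        _ = C' * ‖h ^ (n + 2)‖ := by
            rw [Real.norm_eq_abs, abs_pow]
            ring
    refine IsBigO.of_bound C' (Metric.eventually_nhds_iff.2 ⟨δ, hδ, fun y hy => ?_⟩)
    rw [Real.dist_eq, sub_zero] at hy
    exact key y hy

/-- Taylor expansion of the Jiang–Shu smoothness indicator `β₀³` about the cell
center `x`, for an `f` that is `C⁵` on a neighborhood of `x`. -/
theorem stmt_3 (f : ℝ → ℝ) (x : ℝ) (hf : ContDiffAt ℝ 5 f x) :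
    (fun h : ℝ =>
        (13/12) * (f (x - h) - 2 * f x + f (x + h))^2
          + (1/4) * (f (x - h) - f (x + h))^2
        - ((deriv f x)^2 * h^2
            + ((13/12) * (iteratedDeriv 2 f x)^2
                + (1/3) * deriv f x * iteratedDeriv 3 f x) * h^4))
      =O[𝓝 0] fun h : ℝ => h^5 := by
  have h5 : ContDiffAt ℝ ((4 : ℕ) + 1) f x := by exact_mod_cast hf
  have hRp0 := taylor_isBigO 4 f x h5
  set a1 : ℝ := deriv f x with ha1
  set a2 : ℝ := iteratedDeriv 2 f x with ha2
  set a3 : ℝ := iteratedDeriv 3 f x with ha3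
  set a4 : ℝ := iteratedDeriv 4 f x with ha4
  set P : ℝ → ℝ := fun h => f x + a1 * h + a2 / 2 * h ^ 2 + a3 / 6 * h ^ 3 + a4 / 24 * h ^ 4
    with hP
  have hsum : (fun h : ℝ => f (x + h) -
      ∑ k ∈ Finset.range (4 + 1), ((k.factorial : ℝ)⁻¹ * iteratedDeriv k f x) * h ^ k)
      = fun h => f (x + h) - P h := by
    funext h
    rw [hP]
    simp only [Finset.sum_range_succ, Finset.sum_range_zero, iteratedDeriv_zero,
      iteratedDeriv_one, Nat.factorial, ← ha1, ← ha2, ← ha3, ← ha4]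
    norm_num
    ring
  rw [hsum] at hRp0
  -- minus version
  have hneg : Tendsto (fun h : ℝ => -h) (𝓝 0) (𝓝 0) := by
    simpa using (continuous_neg.tendsto (0 : ℝ))
  have hRm0 : (fun h : ℝ => f (x - h) - P (-h)) =O[𝓝 0] fun h : ℝ => h ^ 5 := by
    have h1 := hRp0.comp_tendsto hneg
    have h2 : ((fun h : ℝ => f (x + h) - P h) ∘ fun h => -h) = fun h => f (x - h) - P (-h) := by
      funext h; simp [Function.comp, sub_eq_add_neg]
    have h3 : ((fun h : ℝ => h ^ 5) ∘ fun h => -h) = fun h : ℝ => -(h ^ 5) := by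
      funext h; simp [Function.comp]; ring
    rw [h2, h3] at h1
    exact h1.trans (isBigO_refl (fun h : ℝ => h ^ 5) _).neg_left
  set Rp : ℝ → ℝ := fun h => f (x + h) - P h with hRpdef
  set Rm : ℝ → ℝ := fun h => f (x - h) - P (-h) with hRmdef
  set S : ℝ → ℝ := fun h => Rm h + Rp h with hSdef
  set D : ℝ → ℝ := fun h => Rm h - Rp h with hDdef
  set A : ℝ → ℝ := fun h => a2 * h ^ 2 + a4 / 12 * h ^ 4 with hA
  set B : ℝ → ℝ := fun h => -(2 * a1 * h) - a3 / 3 * h ^ 3 with hB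
  have hS : S =O[𝓝 0] fun h : ℝ => h ^ 5 := hRm0.add hRp0
  have hD : D =O[𝓝 0] fun h : ℝ => h ^ 5 := hRm0.sub hRp0
  have hpow : Tendsto (fun h : ℝ => h ^ 5) (𝓝 0) (𝓝 0) := by
    simpa using ((continuous_pow 5).tendsto (0 : ℝ))
  have tS : Tendsto S (𝓝 0) (𝓝 0) := hS.trans_tendsto hpow
  have tD : Tendsto D (𝓝 0) (𝓝 0) := hD.trans_tendsto hpow
  have tA : Tendsto A (𝓝 0) (𝓝 0) := by
    have : Continuous A := by rw [hA]; fun_prop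
    simpa [hA] using this.tendsto (0 : ℝ)
  have tB : Tendsto B (𝓝 0) (𝓝 0) := by
    have : Continuous B := by rw [hB]; fun_prop
    simpa [hB] using this.tendsto (0 : ℝ)
  have o1 : (fun h : ℝ => 2 * A h + S h) =O[𝓝 0] (fun _ : ℝ => (1 : ℝ)) := by
    have : Tendsto (fun h : ℝ => 2 * A h + S h) (𝓝 0) (𝓝 (2 * 0 + 0)) :=
      (tA.const_mul 2).add tS
    exact this.isBigO_one ℝ
  have o2 : (fun h : ℝ => 2 * B h + D h) =O[𝓝 0] (fun _ : ℝ => (1 : ℝ)) := by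
    have : Tendsto (fun h : ℝ => 2 * B h + D h) (𝓝 0) (𝓝 (2 * 0 + 0)) :=
      (tB.const_mul 2).add tD
    exact this.isBigO_one ℝ
  have part1 : (fun h : ℝ => S h * (2 * A h + S h)) =O[𝓝 0] fun h : ℝ => h ^ 5 := by
    simpa using hS.mul o1
  have part2 : (fun h : ℝ => D h * (2 * B h + D h)) =O[𝓝 0] fun h : ℝ => h ^ 5 := by
    simpa using hD.mul o2
  have h6 : (fun h : ℝ => h ^ 6) =O[𝓝 0] fun h : ℝ => h ^ 5 :=
    (isLittleO_pow_pow (by norm_num)).isBigO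
  have h8 : (fun h : ℝ => h ^ 8) =O[𝓝 0] fun h : ℝ => h ^ 5 :=
    (isLittleO_pow_pow (by norm_num)).isBigO
  have part3 : (fun h : ℝ => (13 / 72 * a2 * a4 + a3 ^ 2 / 36) * h ^ 6
      + 13 / 1728 * a4 ^ 2 * h ^ 8) =O[𝓝 0] fun h : ℝ => h ^ 5 :=
    (h6.const_mul_left _).add (h8.const_mul_left _)
  have key : (fun h : ℝ =>
        (13/12) * (f (x - h) - 2 * f x + f (x + h))^2
          + (1/4) * (f (x - h) - f (x + h))^2
        - ((deriv f x)^2 * h^2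
            + ((13/12) * (iteratedDeriv 2 f x)^2
                + (1/3) * deriv f x * iteratedDeriv 3 f x) * h^4))
      = fun h : ℝ => (13/12 * (S h * (2 * A h + S h)) + 1/4 * (D h * (2 * B h + D h)))
          + ((13 / 72 * a2 * a4 + a3 ^ 2 / 36) * h ^ 6 + 13 / 1728 * a4 ^ 2 * h ^ 8) := by
    funext h
    simp only [hSdef, hDdef, hRpdef, hRmdef, hA, hB, hP, ← ha1, ← ha2, ← ha3, ← ha4]
    ring
  rw [key]
  exact ((part1.const_mul_left _).add (part2.const_mul_left _)).add part3
end

section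
/- Let γₖ > 0 for k = 1,…,m with Σγₖ = 1, and suppose ηₖ(h) ≥ 0 satisfy ηₖ(h) = O(h⁴) as h → 0. Then the normalized nonlinear weights ωₖ(h) := γₖ(1 + ηₖ(h)) / Σⱼ γⱼ(1 + ηⱼ(h)) satisfy ωₖ(h) = γₖ + O(h⁴) as h → 0. -/
open Asymptotics Filter Topology

/-- The normalized nonlinear weights converge to the linear weights at fourth
order. -/
theorem stmt_7 (m : ℕ) (γ : Fin m → ℝ) (hγ : ∀ k, 0 < γ k)
    (hsum : ∑ k, γ k = 1) (η : Fin m → ℝ → ℝ) (hη0 : ∀ k h, 0 ≤ η k h)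
    (hη : ∀ k, (fun h => η k h) =O[𝓝[>] (0:ℝ)] fun h => h^4) (k : Fin m) :
    (fun h => γ k * (1 + η k h) / ∑ j, γ j * (1 + η j h) - γ k)
      =O[𝓝[>] (0:ℝ)] fun h => h^4 := by
  set T : ℝ → ℝ := fun h => ∑ j, γ j * η j h with hTdef
  have hT0 : ∀ h, 0 ≤ T h := fun h =>
    Finset.sum_nonneg fun j _ => mul_nonneg (hγ j).le (hη0 j h)
  have hS : ∀ h, (∑ j, γ j * (1 + η j h)) = 1 + T h := by
    intro h
    simp only [hTdef, mul_add, mul_one, Finset.sum_add_distrib, hsum]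
  have hg : (fun h => γ k * (η k h + T h)) =O[𝓝[>] (0:ℝ)] fun h => h^4 := by
    apply IsBigO.const_mul_left
    exact (hη k).add (by
      convert (IsBigO.sum (s := Finset.univ) fun j _ => (hη j).const_mul_left (γ j)) using 1
      ext h; simp [hTdef, Finset.sum_apply])
  refine IsBigO.trans ?_ hg
  apply IsBigO.of_bound 1
  filter_upwards with h
  rw [hS h]
  have h1 : (0:ℝ) < 1 + T h := by linarith [hT0 h]
  have heq : γ k * (1 + η k h) / (1 + T h) - γ k
      = γ k * (η k h - T h) / (1 + T h) := by
    field_simp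
    ring
  rw [heq]
  have hγk := hγ k
  have hηk := hη0 k h
  have hTh := hT0 h
  rw [one_mul, Real.norm_eq_abs, Real.norm_eq_abs, abs_div, abs_of_pos h1,
    abs_of_nonneg (by positivity : (0:ℝ) ≤ γ k * (η k h + T h))]
  rw [div_le_iff₀ h1, abs_mul, abs_of_pos hγk]
  rcases abs_cases (η k h - T h) with ⟨he, _⟩ | ⟨he, _⟩ <;> rw [he] <;>
    nlinarith [mul_nonneg (mul_nonneg hγk.le (add_nonneg hηk hTh)) hTh,
      mul_nonneg hγk.le hTh]
end

section
/- Let γₖ > 0 with Σ_{k=1}^m γₖ = 1, let ωₖ ≥ 0 with Σωₖ = 1, and let H ∈ ℝ. Suppose each candidate reconstruction satisfies |Pₖ - H| ≤ C h^{rₖ}. Then the convex combination satisfies |Σₖ ωₖ Pₖ - H| ≤ C Σₖ ωₖ h^{rₖ}; in particular if ωₖ = γₖ + O(h^s) and |Pₖ - H| = O(h³) for all k while the high-order candidate satisfies |P_big - H| = O(h⁵), and s ≥ 2, then the WENO-AO reconstruction F := (ω_big/γ_big)(P_big - Σₖ γₖ Pₖ) + Σₖ ωₖ Pₖ satisfies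 F - H = O(h⁵). -/
open Asymptotics Filter Topology

/-- Convex-combination error bound and fifth-order accuracy of the WENO-AO
reconstruction. -/
theorem stmt_8 :
    (∀ (m : ℕ) (ω P : Fin m → ℝ) (H C h : ℝ) (r : Fin m → ℕ),
        (∀ k, 0 ≤ ω k) → (∑ k, ω k = 1) →
        (∀ k, |P k - H| ≤ C * h ^ r k) →
        |(∑ k, ω k * P k) - H| ≤ C * ∑ k, ω k * h ^ r k) ∧
    (∀ (m : ℕ) (γ : Fin m → ℝ) (γbig : ℝ) (s : ℕ),
        (∀ k, 0 < γ k) → 0 < γbig → γbig + ∑ k, γ k = 1 → 2 ≤ s →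
        ∀ (ω : Fin m → ℝ → ℝ) (ωbig : ℝ → ℝ) (P : Fin m → ℝ → ℝ)
          (Pbig H : ℝ → ℝ),
        (∀ h, ωbig h + ∑ k, ω k h = 1) →
        (∀ k, (fun h => ω k h - γ k) =O[𝓝[>] (0:ℝ)] fun h => h ^ s) →
        ((fun h => ωbig h - γbig) =O[𝓝[>] (0:ℝ)] fun h => h ^ s) →
        (∀ k, (fun h => P k h - H h) =O[𝓝[>] (0:ℝ)] fun h => h ^ 3) →
        ((fun h => Pbig h - H h) =O[𝓝[>] (0:ℝ)] fun h => h ^ 5) →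
        (fun h => (ωbig h / γbig) * (Pbig h - ∑ k, γ k * P k h)
            + (∑ k, ω k h * P k h) - H h) =O[𝓝[>] (0:ℝ)] fun h => h ^ 5) := by
  constructor
  · intro m ω P H C h r hω hsum hP
    have key : (∑ k, ω k * P k) - H = ∑ k, ω k * (P k - H) := by
      simp [mul_sub, Finset.sum_sub_distrib, ← Finset.sum_mul, hsum]
    rw [key, Finset.mul_sum]
    calc |∑ k, ω k * (P k - H)| ≤ ∑ k, |ω k * (P k - H)| :=
          Finset.abs_sum_le_sum_abs _ _
      _ ≤ ∑ k, C * (ω k * h ^ r k) := by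
          apply Finset.sum_le_sum
          intro k _
          rw [abs_mul, abs_of_nonneg (hω k)]
          calc ω k * |P k - H| ≤ ω k * (C * h ^ r k) :=
                mul_le_mul_of_nonneg_left (hP k) (hω k)
            _ = C * (ω k * h ^ r k) := by ring
  · intro m γ γbig s hγ hγbig hγsum hs ω ωbig P Pbig H hωsum hωO hωbigO hPO hPbigO
    have hγbig' : γbig ≠ 0 := ne_of_gt hγbig
    have hmem : Set.Ioo (0:ℝ) 1 ∈ 𝓝[>] (0:ℝ) :=
      Ioo_mem_nhdsGT_of_mem ⟨le_refl 0, one_pos⟩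
    have hpow : ∀ a b : ℕ, a ≤ b →
        (fun h:ℝ => h ^ b) =O[𝓝[>] (0:ℝ)] fun h => h ^ a := by
      intro a b hab
      apply IsBigO.of_bound 1
      filter_upwards [hmem] with x hx
      simp only [Real.norm_eq_abs, abs_pow, one_mul]
      exact pow_le_pow_of_le_one (abs_nonneg x)
        (by rw [abs_of_pos hx.1]; exact hx.2.le) hab
    have h2big : (fun h => ωbig h - γbig) =O[𝓝[>] (0:ℝ)] fun h:ℝ => h ^ 2 :=
      hωbigO.trans (hpow 2 s hs)
    have h2 : ∀ k, (fun h => ω k h - γ k) =O[𝓝[>] (0:ℝ)] fun h:ℝ => h ^ 2 :=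
      fun k => (hωO k).trans (hpow 2 s hs)
    have hone : (fun h:ℝ => h ^ s) =O[𝓝[>] (0:ℝ)] fun _ => (1:ℝ) := by
      simpa using hpow 0 s (Nat.zero_le s)
    have hωbig1 : ωbig =O[𝓝[>] (0:ℝ)] fun _ => (1:ℝ) := by
      have h1 : (fun h => ωbig h - γbig) =O[𝓝[>] (0:ℝ)] fun _ => (1:ℝ) :=
        hωbigO.trans hone
      have hc : (fun _:ℝ => γbig) =O[𝓝[>] (0:ℝ)] fun _ => (1:ℝ) :=
        isBigO_const_const _ one_ne_zero _
      have := h1.add hc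
      simpa using this
    have hterm1 : (fun h => ωbig h / γbig * (Pbig h - H h))
        =O[𝓝[>] (0:ℝ)] fun h:ℝ => h ^ 5 := by
      have hc : (fun h => ωbig h / γbig) =O[𝓝[>] (0:ℝ)] fun _ => (1:ℝ) := by
        have := hωbig1.mul (isBigO_const_const γbig⁻¹ one_ne_zero (𝓝[>] (0:ℝ)))
        simpa [div_eq_mul_inv] using this
      simpa using hc.mul hPbigO
    have hcoef : ∀ k, (fun h => ω k h - ωbig h / γbig * γ k)
        =O[𝓝[>] (0:ℝ)] fun h:ℝ => h ^ 2 := by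
      intro k
      have heq : (fun h => ω k h - ωbig h / γbig * γ k)
          = fun h => (ω k h - γ k) - (γ k / γbig) * (ωbig h - γbig) := by
        funext h; field_simp; ring
      rw [heq]
      exact (h2 k).sub (h2big.const_mul_left _)
    have hterm : ∀ k, (fun h => (ω k h - ωbig h / γbig * γ k) * (P k h - H h))
        =O[𝓝[>] (0:ℝ)] fun h:ℝ => h ^ 5 := by
      intro k
      have := (hcoef k).mul (hPO k)
      simpa [← pow_add] using this
    have key : (fun h => (ωbig h / γbig) * (Pbig h - ∑ k, γ k * P k h)
        + (∑ k, ω k h * P k h) - H h)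
        = fun h => ωbig h / γbig * (Pbig h - H h)
          + ∑ k, (ω k h - ωbig h / γbig * γ k) * (P k h - H h) := by
      funext h
      have hsum1 : ∑ k, ω k h = 1 - ωbig h := by linarith [hωsum h]
      have hsum2 : ∑ k, γ k = 1 - γbig := by linarith [hγsum]
      have e1 : ∀ k : Fin m, (ω k h - ωbig h / γbig * γ k) * (P k h - H h)
          = ω k h * P k h - ω k h * H h
            - ωbig h / γbig * (γ k * P k h) + ωbig h / γbig * γ k * H h :=
        fun k => by ring
      simp only [e1]
      rw [Finset.sum_add_distrib, Finset.sum_sub_distrib, Finset.sum_sub_distrib,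
        ← Finset.sum_mul, ← Finset.mul_sum, ← Finset.sum_mul, ← Finset.mul_sum,
        hsum1, hsum2]
      field_simp
      ring
    rw [key]
    exact hterm1.add (IsBigO.fun_sum fun k _ => hterm k)
end

section
/- Suppose τ(h)²/(βₖ(h)+ε)² = τ(h)²/((f')⁴h⁴) + O(h⁻³) for k ∈ S (smooth stencils) and τ(h)²/(βₖ(h)+ε)² = τ(h)²·O(1) for k ∈ D (discontinuous stencils), with τ(h) bounded away from 0 and f' ≠ 0. Then for k ∈ D the normalized weights ωₖ = γₖ(1+τ²/(βₖ+ε)²)/Σⱼ γⱼ(1+τ²/(βⱼ+ε)²) satisfy ωₖ = O(h⁴), and for k ∈ S they satisfy ωₖ = γₖ/(Σ_{j∈S} γⱼ) + O(h) as h → 0. -/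
open Asymptotics Filter Topology

set_option maxHeartbeats 1000000 in
/-- Behaviour of the normalized nonlinear weights when a discontinuity lies in
some stencils (`D`) while the others (`S`) remain smooth: weights of
discontinuous stencils are `O(h⁴)`, while weights of smooth stencils converge
to the renormalized linear weights at rate `O(h)`. -/
theorem stmt_10 (m : ℕ) (γ : Fin m → ℝ) (hγ : ∀ k, 0 < γ k)
    (hsum : ∑ k, γ k = 1) (S D : Finset (Fin m)) (hSD : Disjoint S D)
    (hcover : S ∪ D = Finset.univ) (hSne : S.Nonempty)
    (τ : ℝ → ℝ) (q : Fin m → ℝ → ℝ) (hq0 : ∀ k h, 0 ≤ q k h)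
    (fp : ℝ) (hfp : fp ≠ 0)
    (hτ : ∃ δ > 0, ∀ᶠ h in 𝓝[>] (0:ℝ), δ ≤ τ h)
    (hqS : ∀ k ∈ S,
      (fun h => q k h - (τ h)^2 / (fp^4 * h^4)) =O[𝓝[>] (0:ℝ)] fun h => (h^3)⁻¹)
    (hqD : ∀ k ∈ D, (fun h => q k h) =O[𝓝[>] (0:ℝ)] fun h => (τ h)^2) :
    (∀ k ∈ D,
      (fun h => γ k * (1 + q k h) / ∑ j, γ j * (1 + q j h))
        =O[𝓝[>] (0:ℝ)] fun h => h^4) ∧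
    (∀ k ∈ S,
      (fun h => γ k * (1 + q k h) / (∑ j, γ j * (1 + q j h)) - γ k / ∑ j ∈ S, γ j)
        =O[𝓝[>] (0:ℝ)] fun h => h) := by
  obtain ⟨δ, hδ, hτev⟩ := hτ
  set l : Filter ℝ := 𝓝[>] (0:ℝ) with hldef
  set G : ℝ := ∑ j ∈ S, γ j with hGdef
  have hG : 0 < G := Finset.sum_pos (fun j _ => hγ j) hSne
  have hp : (0:ℝ) < fp ^ 4 := by positivity
  set A : ℝ → ℝ := fun h => (τ h) ^ 2 / (fp ^ 4 * h ^ 4) with hAdef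
  have hsplit : ∀ f : Fin m → ℝ, ∑ j, f j = (∑ j ∈ S, f j) + ∑ j ∈ D, f j := by
    intro f; rw [← Finset.sum_union hSD, hcover]
  -- the sum of errors on smooth stencils is O(h⁻³)
  have hES : (fun h => ∑ j ∈ S, γ j * |q j h - A h|) =O[l] fun h => (h ^ 3)⁻¹ := by
    refine Asymptotics.IsBigO.fun_sum fun j hj => ?_
    have := ((hqS j hj).norm_left).const_mul_left (γ j)
    simpa [Real.norm_eq_abs, hAdef] using this
  -- 1 = O(τ²)
  have h1τ : (fun _ : ℝ => (1:ℝ)) =O[l] fun h => (τ h) ^ 2 := by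
    rw [isBigO_iff]
    refine ⟨(δ ^ 2)⁻¹, ?_⟩
    filter_upwards [hτev] with h hh
    have hδτ : δ ^ 2 ≤ (τ h) ^ 2 := by nlinarith
    have h2 : (0:ℝ) < δ ^ 2 := by positivity
    rw [norm_one, Real.norm_eq_abs, abs_of_nonneg (sq_nonneg _), ← div_eq_inv_mul,
      le_div_iff₀ h2, one_mul]
    exact hδτ
  -- the sum over discontinuous stencils is O(τ²)
  have hED : (fun h => ∑ j ∈ D, γ j * (1 + q j h)) =O[l] fun h => (τ h) ^ 2 := by
    refine Asymptotics.IsBigO.fun_sum fun j hj => ?_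
    exact (h1τ.add (hqD j hj)).const_mul_left (γ j)
  obtain ⟨c₁, hc₁pos, hc₁w⟩ := hES.exists_pos
  have hc₁b := hc₁w.bound
  obtain ⟨c₂, hc₂pos, hc₂w⟩ := hED.exists_pos
  have hc₂b := hc₂w.bound
  -- smallness of h
  have h₀pos : (0:ℝ) < min 1 (G * δ ^ 2 / (2 * fp ^ 4 * c₁)) := by positivity
  have hsm : ∀ᶠ h in l, h ≤ min 1 (G * δ ^ 2 / (2 * fp ^ 4 * c₁)) :=
    (eventually_le_nhds h₀pos).filter_mono nhdsWithin_le_nhds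
  -- key eventual facts: positivity, bounds, lower bound on denominator
  have hkey : ∀ᶠ h in l, 0 < h ∧ h ≤ 1 ∧ δ ≤ τ h ∧
      (∑ j ∈ S, γ j * |q j h - A h|) ≤ c₁ / h ^ 3 ∧
      (∑ j ∈ D, γ j * (1 + q j h)) ≤ c₂ * (τ h) ^ 2 ∧
      G / 2 * A h ≤ ∑ j, γ j * (1 + q j h) := by
    filter_upwards [eventually_mem_nhdsWithin, hsm, hτev, hc₁b, hc₂b]
      with h hmem hh0 hτh hES' hED'
    have hpos : (0:ℝ) < h := hmem
    have h1 : h ≤ 1 := le_trans hh0 (min_le_left _ _)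
    have hτpos : 0 < τ h := lt_of_lt_of_le hδ hτh
    have hESnn : 0 ≤ ∑ j ∈ S, γ j * |q j h - A h| :=
      Finset.sum_nonneg fun j _ => mul_nonneg (hγ j).le (abs_nonneg _)
    have hEDnn : 0 ≤ ∑ j ∈ D, γ j * (1 + q j h) :=
      Finset.sum_nonneg fun j _ => mul_nonneg (hγ j).le (by nlinarith [hq0 j h])
    have hESle : (∑ j ∈ S, γ j * |q j h - A h|) ≤ c₁ / h ^ 3 := by
      rw [Real.norm_of_nonneg hESnn, Real.norm_eq_abs,
        abs_of_pos (by positivity : (0:ℝ) < (h ^ 3)⁻¹)] at hES'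
      simpa [div_eq_mul_inv] using hES'
    have hEDle : (∑ j ∈ D, γ j * (1 + q j h)) ≤ c₂ * (τ h) ^ 2 := by
      rw [Real.norm_of_nonneg hEDnn, Real.norm_eq_abs,
        abs_of_nonneg (sq_nonneg (τ h))] at hED'
      exact hED'
    refine ⟨hpos, h1, hτh, hESle, hEDle, ?_⟩
    -- lower bound on the denominator
    have hc₁h : c₁ / h ^ 3 ≤ G / 2 * A h := by
      have hh0' : h ≤ G * δ ^ 2 / (2 * fp ^ 4 * c₁) := le_trans hh0 (min_le_right _ _)
      have hh0'' : 2 * fp ^ 4 * c₁ * h ≤ G * δ ^ 2 := by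
        rw [le_div_iff₀ (by positivity)] at hh0'
        linarith
      have hδτ : δ ^ 2 ≤ (τ h) ^ 2 := by nlinarith
      rw [div_le_iff₀ (by positivity), hAdef]
      have : G / 2 * ((τ h) ^ 2 / (fp ^ 4 * h ^ 4)) * h ^ 3
          = G * (τ h) ^ 2 / (2 * fp ^ 4 * h) := by
        field_simp
      rw [this, le_div_iff₀ (by positivity)]
      nlinarith [hh0'', hδτ, hG.le]
    have step1 : ∑ j ∈ S, (γ j * A h - γ j * |q j h - A h|) ≤ ∑ j ∈ S, γ j * (1 + q j h) := by
      refine Finset.sum_le_sum fun j hj => ?_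
      nlinarith [neg_abs_le (q j h - A h), (hγ j).le, abs_nonneg (q j h - A h), hγ j]
    have sumeq : ∑ j ∈ S, (γ j * A h - γ j * |q j h - A h|)
        = G * A h - ∑ j ∈ S, γ j * |q j h - A h| := by
      rw [Finset.sum_sub_distrib, hGdef, Finset.sum_mul]
    rw [sumeq] at step1
    rw [hsplit (fun j => γ j * (1 + q j h))]
    have : G / 2 * A h ≤ G * A h - c₁ / h ^ 3 := by nlinarith [hc₁h]
    linarith [hESle, step1, hEDnn]
  constructor
  · -- discontinuous stencils: O(h⁴)
    intro k hk
    have hγk : 0 < γ k := hγ k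
    obtain ⟨c₄, hc₄pos, hc₄w⟩ := (hqD k hk).exists_pos
    have hc₄b := hc₄w.bound
    rw [isBigO_iff]
    refine ⟨γ k * ((δ ^ 2)⁻¹ + c₄) * (2 * fp ^ 4 / G), ?_⟩
    filter_upwards [hkey, hc₄b] with h hkey' hqk
    obtain ⟨h0, h1, hτh, _, _, hDen⟩ := hkey'
    have hτpos : 0 < τ h := lt_of_lt_of_le hδ hτh
    have hApos : 0 < A h := div_pos (by positivity) (by positivity)
    have hDpos : 0 < ∑ j, γ j * (1 + q j h) := lt_of_lt_of_le (by positivity) hDen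
    have hqkb : q k h ≤ c₄ * (τ h) ^ 2 := by
      rw [Real.norm_of_nonneg (hq0 k h), Real.norm_eq_abs,
        abs_of_nonneg (sq_nonneg (τ h))] at hqk
      exact hqk
    have h1τ' : (1:ℝ) ≤ (δ ^ 2)⁻¹ * (τ h) ^ 2 := by
      rw [← div_eq_inv_mul, le_div_iff₀ (by positivity)]
      nlinarith
    have hnum : γ k * (1 + q k h) ≤ γ k * ((δ ^ 2)⁻¹ + c₄) * (τ h) ^ 2 := by
      have h2 : 1 + q k h ≤ ((δ ^ 2)⁻¹ + c₄) * (τ h) ^ 2 := by nlinarith [hqkb, h1τ']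
      calc γ k * (1 + q k h) ≤ γ k * (((δ ^ 2)⁻¹ + c₄) * (τ h) ^ 2) :=
            mul_le_mul_of_nonneg_left h2 (hγ k).le
        _ = γ k * ((δ ^ 2)⁻¹ + c₄) * (τ h) ^ 2 := by ring
    have hnn : 0 ≤ γ k * (1 + q k h) := mul_nonneg (hγ k).le (by nlinarith [hq0 k h])
    rw [Real.norm_eq_abs, Real.norm_eq_abs, abs_of_nonneg (div_nonneg hnn hDpos.le),
      abs_of_pos (by positivity : (0:ℝ) < h ^ 4), div_le_iff₀ hDpos]
    have hkey2 : γ k * ((δ ^ 2)⁻¹ + c₄) * (2 * fp ^ 4 / G) * h ^ 4 * (G / 2 * A h)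
        = γ k * ((δ ^ 2)⁻¹ + c₄) * (τ h) ^ 2 := by
      rw [hAdef]; field_simp
    have hCnn : 0 ≤ γ k * ((δ ^ 2)⁻¹ + c₄) * (2 * fp ^ 4 / G) * h ^ 4 := by positivity
    calc γ k * (1 + q k h) ≤ γ k * ((δ ^ 2)⁻¹ + c₄) * (τ h) ^ 2 := hnum
      _ = γ k * ((δ ^ 2)⁻¹ + c₄) * (2 * fp ^ 4 / G) * h ^ 4 * (G / 2 * A h) := hkey2.symm
      _ ≤ γ k * ((δ ^ 2)⁻¹ + c₄) * (2 * fp ^ 4 / G) * h ^ 4 * ∑ j, γ j * (1 + q j h) :=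
          mul_le_mul_of_nonneg_left hDen hCnn
  · -- smooth stencils
    intro k hk
    have hγk : 0 < γ k := hγ k
    obtain ⟨c₃, hc₃pos, hc₃w⟩ := (hqS k hk).exists_pos
    have hc₃b := hc₃w.bound
    rw [isBigO_iff]
    refine ⟨γ k * ((G * c₃ + c₁) * (δ ^ 2)⁻¹ + c₂) * (2 * fp ^ 4 / G ^ 2), ?_⟩
    filter_upwards [hkey, hc₃b] with h hkey' hqk
    obtain ⟨h0, h1, hτh, hESle, hEDle, hDen⟩ := hkey'
    have hτpos : 0 < τ h := lt_of_lt_of_le hδ hτh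
    have hApos : 0 < A h := div_pos (by positivity) (by positivity)
    have hDpos : 0 < ∑ j, γ j * (1 + q j h) := lt_of_lt_of_le (by positivity) hDen
    set Den : ℝ := ∑ j, γ j * (1 + q j h) with hDendef
    have hqkA : |q k h - A h| ≤ c₃ / h ^ 3 := by
      have := hqk
      rw [Real.norm_eq_abs, Real.norm_eq_abs,
        abs_of_pos (by positivity : (0:ℝ) < (h ^ 3)⁻¹)] at this
      simpa [div_eq_mul_inv, hAdef] using this
    -- expand the difference
    have expand : G * (1 + q k h) - Den
        = (∑ j ∈ S, γ j * (q k h - q j h)) - ∑ j ∈ D, γ j * (1 + q j h) := by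
      have e : (∑ j ∈ S, γ j * (1 + q k h)) - ∑ j ∈ S, γ j * (1 + q j h)
          = ∑ j ∈ S, γ j * (q k h - q j h) := by
        rw [← Finset.sum_sub_distrib]
        exact Finset.sum_congr rfl fun j _ => by ring
      rw [hDendef, hsplit (fun j => γ j * (1 + q j h)), hGdef, Finset.sum_mul]
      linarith [e]
    have hSsum : |∑ j ∈ S, γ j * (q k h - q j h)| ≤ G * (c₃ / h ^ 3) + c₁ / h ^ 3 := by
      calc |∑ j ∈ S, γ j * (q k h - q j h)| ≤ ∑ j ∈ S, |γ j * (q k h - q j h)| :=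
            Finset.abs_sum_le_sum_abs _ _
        _ ≤ ∑ j ∈ S, (γ j * |q k h - A h| + γ j * |q j h - A h|) := by
            refine Finset.sum_le_sum fun j hj => ?_
            rw [abs_mul, abs_of_pos (hγ j)]
            have : |q k h - q j h| ≤ |q k h - A h| + |q j h - A h| := by
              have := abs_sub (q k h - A h) (q j h - A h)
              calc |q k h - q j h| = |(q k h - A h) - (q j h - A h)| := by ring_nf
                _ ≤ |q k h - A h| + |q j h - A h| := abs_sub _ _
            nlinarith [(hγ j).le, abs_nonneg (q k h - q j h)]
        _ = G * |q k h - A h| + ∑ j ∈ S, γ j * |q j h - A h| := by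
            rw [Finset.sum_add_distrib, hGdef, ← Finset.sum_mul]
        _ ≤ G * (c₃ / h ^ 3) + c₁ / h ^ 3 := by
            have := mul_le_mul_of_nonneg_left hqkA hG.le
            linarith [hESle]
    have hdiff : |G * (1 + q k h) - Den| ≤ (G * c₃ + c₁) / h ^ 3 + c₂ * (τ h) ^ 2 := by
      rw [expand]
      have hEDnn : 0 ≤ ∑ j ∈ D, γ j * (1 + q j h) :=
        Finset.sum_nonneg fun j _ => mul_nonneg (hγ j).le (by nlinarith [hq0 j h])
      have habs : |(∑ j ∈ S, γ j * (q k h - q j h)) - ∑ j ∈ D, γ j * (1 + q j h)|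
          ≤ |∑ j ∈ S, γ j * (q k h - q j h)| + |∑ j ∈ D, γ j * (1 + q j h)| := abs_sub _ _
      rw [abs_of_nonneg hEDnn] at habs
      have : G * (c₃ / h ^ 3) + c₁ / h ^ 3 = (G * c₃ + c₁) / h ^ 3 := by ring
      linarith [hSsum, hEDle]
    -- rewrite the weight difference as a single fraction
    have hfrac : γ k * (1 + q k h) / Den - γ k / G
        = γ k * (G * (1 + q k h) - Den) / (Den * G) := by
      rw [div_sub_div _ _ (ne_of_gt hDpos) (ne_of_gt hG)]
      ring_nf
    rw [hfrac, Real.norm_eq_abs, Real.norm_eq_abs, abs_of_pos h0, abs_div,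
      abs_of_pos (mul_pos hDpos hG), abs_mul, abs_of_pos (hγ k),
      div_le_iff₀ (mul_pos hDpos hG)]
    -- final chain
    have h1τ' : 1 ≤ (δ ^ 2)⁻¹ * (τ h) ^ 2 := by
      rw [← div_eq_inv_mul, le_div_iff₀ (by positivity)]
      nlinarith
    have hbound : (G * c₃ + c₁) / h ^ 3 + c₂ * (τ h) ^ 2
        ≤ ((G * c₃ + c₁) * (δ ^ 2)⁻¹ + c₂) * (τ h) ^ 2 / h ^ 3 := by
      have hGc : 0 ≤ G * c₃ + c₁ := by positivity
      have e1 : (G * c₃ + c₁) / h ^ 3 ≤ (G * c₃ + c₁) * (δ ^ 2)⁻¹ * (τ h) ^ 2 / h ^ 3 := by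
        apply div_le_div_of_nonneg_right ?_ (by positivity)
        nlinarith [h1τ', hGc]
      have e2 : c₂ * (τ h) ^ 2 ≤ c₂ * (τ h) ^ 2 / h ^ 3 := by
        rw [le_div_iff₀ (by positivity)]
        nlinarith [mul_le_mul_of_nonneg_left (pow_le_one₀ h0.le h1 : h ^ 3 ≤ 1)
          (mul_nonneg hc₂pos.le (sq_nonneg (τ h)))]
      calc (G * c₃ + c₁) / h ^ 3 + c₂ * (τ h) ^ 2
          ≤ (G * c₃ + c₁) * (δ ^ 2)⁻¹ * (τ h) ^ 2 / h ^ 3 + c₂ * (τ h) ^ 2 / h ^ 3 := by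
            linarith [e1, e2]
        _ = ((G * c₃ + c₁) * (δ ^ 2)⁻¹ + c₂) * (τ h) ^ 2 / h ^ 3 := by ring
    have hkey2 : γ k * ((G * c₃ + c₁) * (δ ^ 2)⁻¹ + c₂) * (2 * fp ^ 4 / G ^ 2) * h
        * (G / 2 * A h * G)
        = γ k * (((G * c₃ + c₁) * (δ ^ 2)⁻¹ + c₂) * (τ h) ^ 2 / h ^ 3) := by
      rw [hAdef]; field_simp
    have hClow : 0 ≤ γ k * ((G * c₃ + c₁) * (δ ^ 2)⁻¹ + c₂) * (2 * fp ^ 4 / G ^ 2) * h := by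
      positivity
    calc γ k * |G * (1 + q k h) - Den|
        ≤ γ k * ((G * c₃ + c₁) / h ^ 3 + c₂ * (τ h) ^ 2) :=
          mul_le_mul_of_nonneg_left hdiff (hγ k).le
      _ ≤ γ k * (((G * c₃ + c₁) * (δ ^ 2)⁻¹ + c₂) * (τ h) ^ 2 / h ^ 3) :=
          mul_le_mul_of_nonneg_left hbound (hγ k).le
      _ = γ k * ((G * c₃ + c₁) * (δ ^ 2)⁻¹ + c₂) * (2 * fp ^ 4 / G ^ 2) * h
          * (G / 2 * A h * G) := hkey2.symm
      _ ≤ γ k * ((G * c₃ + c₁) * (δ ^ 2)⁻¹ + c₂) * (2 * fp ^ 4 / G ^ 2) * h * (Den * G) := by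
          have : G / 2 * A h * G ≤ Den * G :=
            mul_le_mul_of_nonneg_right hDen hG.le
          exact mul_le_mul_of_nonneg_left this hClow
end

section
/- If ω₀⁴ + ω₀³ + ω₁³ = 1 + O(h⁴), ω₀³ = c + O(h) and ω₁³ = c + O(h) for a constant c > 0, P₀²+P₁² = 2P₀³ (the interface identity), and |P₀³ - H| = O(h⁴), |P₀² - H| = O(h³), |P₁² - H| = O(h³), then the reconstruction F = ω₀⁴P₀³ + ω₀³P₀² + ω₁³P₁² satisfies F - H = O(h⁴). -/
open Asymptotics Filter Topology

/-- Fourth-order accuracy of the WENO-AO(5,4,3) reconstruction when the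
solution is smooth on the four-point stencil but discontinuous on the
five-point stencil. -/
theorem stmt_11 (ω04 ω03 ω13 P03 P02 P12 : ℝ → ℝ) (H c : ℝ) (hc : 0 < c)
    (hsum : (fun h => ω04 h + ω03 h + ω13 h - 1) =O[𝓝[>] (0:ℝ)] fun h => h^4)
    (hω03 : (fun h => ω03 h - c) =O[𝓝[>] (0:ℝ)] fun h => h)
    (hω13 : (fun h => ω13 h - c) =O[𝓝[>] (0:ℝ)] fun h => h)
    (hP : ∀ h, P02 h + P12 h = 2 * P03 h)
    (hP03 : (fun h => P03 h - H) =O[𝓝[>] (0:ℝ)] fun h => h^4)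
    (hP02 : (fun h => P02 h - H) =O[𝓝[>] (0:ℝ)] fun h => h^3)
    (hP12 : (fun h => P12 h - H) =O[𝓝[>] (0:ℝ)] fun h => h^3) :
    (fun h => ω04 h * P03 h + ω03 h * P02 h + ω13 h * P12 h - H)
      =O[𝓝[>] (0:ℝ)] fun h => h^4 := by
  have key : ∀ h, ω04 h * P03 h + ω03 h * P02 h + ω13 h * P12 h - H =
      H * (ω04 h + ω03 h + ω13 h - 1) + ω04 h * (P03 h - H) +
      (ω03 h - c) * (P02 h - H) + (ω13 h - c) * (P12 h - H) +
      (2 * c) * (P03 h - H) := by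
    intro h
    linear_combination c * (hP h)
  -- h = O(1) near 0⁺
  have hid : (fun h : ℝ => h) =O[𝓝[>] (0:ℝ)] (fun _ => (1:ℝ)) := by
    have : Filter.Tendsto (fun h : ℝ => h) (𝓝[>] (0:ℝ)) (𝓝 0) :=
      tendsto_nhdsWithin_of_tendsto_nhds tendsto_id
    exact this.isBigO_one ℝ
  have h4O1 : (fun h : ℝ => h ^ 4) =O[𝓝[>] (0:ℝ)] (fun _ => (1:ℝ)) :=
    ((hid.pow 4).trans (by simpa using (isBigO_refl (fun _ : ℝ => (1:ℝ)) _)))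
  have hω04 : (fun h => ω04 h) =O[𝓝[>] (0:ℝ)] (fun _ => (1:ℝ)) := by
    have h1 : (fun h => ω04 h) = fun h =>
        (ω04 h + ω03 h + ω13 h - 1) - (ω03 h - c) - (ω13 h - c) + (1 - 2 * c) := by
      funext h; ring
    rw [h1]
    exact (((hsum.trans h4O1).sub (hω03.trans hid)).sub (hω13.trans hid)).add
      (isBigO_const_const _ (one_ne_zero) _)
  have hpow : ∀ h : ℝ, h * h ^ 3 = h ^ 4 := fun h => by ring
  have t1 : (fun h => H * (ω04 h + ω03 h + ω13 h - 1)) =O[𝓝[>] (0:ℝ)]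
      fun h => h ^ 4 := hsum.const_mul_left H
  have t2 : (fun h => ω04 h * (P03 h - H)) =O[𝓝[>] (0:ℝ)] fun h => h ^ 4 := by
    have := hω04.mul hP03
    simpa using this
  have t3 : (fun h => (ω03 h - c) * (P02 h - H)) =O[𝓝[>] (0:ℝ)] fun h => h ^ 4 :=
    (hω03.mul hP02).congr (fun _ => rfl) hpow
  have t4 : (fun h => (ω13 h - c) * (P12 h - H)) =O[𝓝[>] (0:ℝ)] fun h => h ^ 4 :=
    (hω13.mul hP12).congr (fun _ => rfl) hpow
  have t5 : (fun h => (2 * c) * (P03 h - H)) =O[𝓝[>] (0:ℝ)] fun h => h ^ 4 :=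
    hP03.const_mul_left (2 * c)
  exact ((((t1.add t2).add t3).add t4).add t5).congr (fun h => (key h).symm) (fun _ => rfl)
end
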